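/- Let O be a Noetherian integrally closed domain and let q be a prime ideal of the polynomial ring O[t] such that q ∩ O = (0) and the quotient O[t]/q is finitely generated as an O-module. Then q is a principal ideal generated by a monic polynomial: there exists a unique monic polynomial h ∈ O[t] with q = (h). -/

import Mathlib

/-!
STATEMENT 10: Let `O` be a Noetherian integrally closed domain and `q` a prime ideal of the
polynomial ring `O[t]` such that `q ∩ O = (0)` and `O[t]/q` is finitely generated as an
`O`-module.  Then `q` is generated by a unique monic polynomial `h ∈ O[t]`.
-/

theorem prime_ideal_eq_span_monic_of_finite_quotient
    (O : Type*) [CommRing O] [IsDomain O] [IsNoetherianRing O] [IsIntegrallyClosed O]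
    (q : Ideal (Polynomial O)) (hq : q.IsPrime)
    (hq0 : q.comap (Polynomial.C : O →+* Polynomial O) = ⊥)
    (hfin : Module.Finite O (Polynomial O ⧸ q)) :
    ∃! h : Polynomial O, h.Monic ∧ q = Ideal.span {h} := by
  classical
  haveI := hq
  set A := Polynomial O ⧸ q with hA
  have hinj : Function.Injective (algebraMap O A) := by
    rw [injective_iff_map_eq_zero]
    intro a ha
    have hCa : Polynomial.C a ∈ q := by
      have : algebraMap O A a = Ideal.Quotient.mk q (Polynomial.C a) := rfl
      rwa [this, Ideal.Quotient.eq_zero_iff_mem] at ha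
    have : a ∈ q.comap (Polynomial.C : O →+* Polynomial O) := Ideal.mem_comap.mpr hCa
    rw [hq0] at this
    simpa using this
  haveI : Module.IsTorsionFree O A := Module.isTorsionFree_iff_algebraMap_injective.mpr hinj
  let K := FractionRing O
  let L := FractionRing A
  haveI : IsScalarTower O A L := inferInstance
  have hinjOL : Function.Injective (algebraMap O L) :=
    (IsFractionRing.injective A L).comp hinj
  haveI : Module.IsTorsionFree O L := Module.isTorsionFree_iff_algebraMap_injective.mpr hinjOL
  letI : Algebra K L := FractionRing.liftAlgebra O L
  haveI : IsScalarTower O K L := FractionRing.isScalarTower_liftAlgebra O L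
  -- the element
  set θ : L := algebraMap A L (Ideal.Quotient.mk q Polynomial.X) with hθdef
  have hint : IsIntegral O θ := by
    haveI : Algebra.IsIntegral O A := Algebra.IsIntegral.of_finite O A
    exact (Algebra.IsIntegral.isIntegral (R := O) (Ideal.Quotient.mk q Polynomial.X)).map
      (IsScalarTower.toAlgHom O A L)
  -- key evaluation formula
  have key : ∀ p : Polynomial O,
      Polynomial.aeval θ p = algebraMap A L (Ideal.Quotient.mk q p) := by
    intro p
    have h1 : θ = (IsScalarTower.toAlgHom O A L) ((Ideal.Quotient.mkₐ O q) Polynomial.X) := rfl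
    rw [h1, Polynomial.aeval_algHom_apply, Polynomial.aeval_algHom_apply,
      Polynomial.aeval_X_left_apply]
    rfl
  set h : Polynomial O := minpoly O θ with hhdef
  have hmonic : h.Monic := minpoly.monic hint
  have hmem : h ∈ q := by
    have : algebraMap A L (Ideal.Quotient.mk q h) = 0 := by
      rw [← key]; exact minpoly.aeval O θ
    have h0 : algebraMap A L (Ideal.Quotient.mk q h) = algebraMap A L 0 := by
      rw [this, map_zero]
    have := IsFractionRing.injective A L h0
    rwa [← Ideal.Quotient.eq_zero_iff_mem]
  have hspan : q = Ideal.span {h} := by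
    apply le_antisymm
    · intro g hg
      rw [Ideal.mem_span_singleton]
      rw [← Polynomial.map_dvd_map (algebraMap O K) (IsFractionRing.injective O K) hmonic]
      rw [← minpoly.isIntegrallyClosed_eq_field_fractions' K hint]
      apply minpoly.dvd
      rw [Polynomial.aeval_map_algebraMap, key, Ideal.Quotient.eq_zero_iff_mem.mpr hg, map_zero]
    · rwa [Ideal.span_le, Set.singleton_subset_iff]
  refine ⟨h, ⟨hmonic, hspan⟩, ?_⟩
  rintro h' ⟨h'mon, h'span⟩
  have hassoc : Associated h' h := by
    rw [← Ideal.span_singleton_eq_span_singleton, ← h'span, hspan]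
  exact Polynomial.eq_of_monic_of_associated h'mon hmonic hassoc
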